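/- A permutation σ ∈ S_n is 132-avoiding if and only if its Rothe diagram D(σ) equals its connected component containing the cell (1,1) (where the component is empty if (1,1) ∉ D(σ)). -/

import Mathlib

/-- The adjacent transposition `s_a` (1-indexed letter `a`) acting on positions `Fin n`. -/
def adjT (n a : ℕ) : Equiv.Perm (Fin n) :=
  if h : 1 ≤ a ∧ a < n then Equiv.swap ⟨a - 1, by omega⟩ ⟨a, h.2⟩ else 1

/-- The permutation `s_{w_1} ∘ s_{w_2} ∘ ⋯ ∘ s_{w_m}` of a word, transpositions acting on
positions composed from the left (`s_{w_1}` applied first to the identity). -/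
def permOfWord (n : ℕ) (w : List ℕ) : Equiv.Perm (Fin n) :=
  (w.map (adjT n)).prod

/-- The set of inversions of a permutation. -/
def invSet {n : ℕ} (σ : Equiv.Perm (Fin n)) : Set (Fin n × Fin n) :=
  {p | p.1 < p.2 ∧ σ p.2 < σ p.1}

/-- The number of inversions. -/
noncomputable def invNum {n : ℕ} (σ : Equiv.Perm (Fin n)) : ℕ := (invSet σ).ncard

/-- `w` is a reduced word for `σ`: letters in `[n-1]`, the product of the corresponding
adjacent transpositions is `σ`, and the length is `inv σ`. -/
def IsReducedWord (n : ℕ) (σ : Equiv.Perm (Fin n)) (w : List ℕ) : Prop :=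
  (∀ a ∈ w, 1 ≤ a ∧ a < n) ∧ permOfWord n w = σ ∧ w.length = invNum σ

/-- `σ` avoids the pattern 132. -/
def Avoids132 {n : ℕ} (σ : Equiv.Perm (Fin n)) : Prop :=
  ¬ ∃ i1 i2 i3 : Fin n, i1 < i2 ∧ i2 < i3 ∧ σ i1 < σ i3 ∧ σ i3 < σ i2

/-- `σ` avoids the pattern 312. -/
def Avoids312 {n : ℕ} (σ : Equiv.Perm (Fin n)) : Prop :=
  ¬ ∃ i1 i2 i3 : Fin n, i1 < i2 ∧ i2 < i3 ∧ σ i2 < σ i3 ∧ σ i3 < σ i1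

/-- The Rothe diagram of `σ` (permutation matrix with 1s at `(σ i, i)`, 0-indexed):
cells strictly north of the 1 in their column and strictly west of the 1 in their row. -/
def rothe {n : ℕ} (σ : Equiv.Perm (Fin n)) : Set (Fin n × Fin n) :=
  {p | p.1 < σ p.2 ∧ p.2 < σ.symm p.1}

/-- Two cells are adjacent if they share an edge. -/
def adjCell {n : ℕ} (p q : Fin n × Fin n) : Prop :=
  (p.1 = q.1 ∧ ((p.2 : ℕ) + 1 = q.2 ∨ (q.2 : ℕ) + 1 = p.2)) ∨
  (p.2 = q.2 ∧ ((p.1 : ℕ) + 1 = q.1 ∨ (q.1 : ℕ) + 1 = p.1))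

/-- The connected component of the Rothe diagram containing the (0-indexed) cell `(0,0)`,
empty if `(0,0)` is not in the diagram. -/
def comp11 {n : ℕ} (σ : Equiv.Perm (Fin n)) : Set (Fin n × Fin n) :=
  {p | ∃ h0 : 0 < n,
    Relation.ReflTransGen (fun a b => a ∈ rothe σ ∧ b ∈ rothe σ ∧ adjCell a b)
      (⟨⟨0, h0⟩, ⟨0, h0⟩⟩) p ∧
    p ∈ rothe σ ∧ ((⟨⟨0, h0⟩, ⟨0, h0⟩⟩ : Fin n × Fin n)) ∈ rothe σ}

/-- Edelman–Greene insertion of `x` into a single (strictly increasing) row: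
returns the new row and the optional entry bumped into the next row. -/
def insRow (x : ℕ) : List ℕ → List ℕ × Option ℕ
  | [] => ([x], none)
  | z :: zs =>
    if z < x then
      let r := insRow x zs
      (z :: r.1, r.2)
    else if z = x then (z :: zs, some (z + 1))
    else (x :: zs, some z)

/-- Edelman–Greene insertion of `x` into a tableau (list of rows). -/
def insTab (x : ℕ) : List (List ℕ) → List (List ℕ)
  | [] => [[x]]
  | r :: rs =>
    let p := insRow x r
    match p.2 with
    | none => p.1 :: rs
    | some y => p.1 :: insTab y rs

/-- The Edelman–Greene insertion tableau `P(w)`. -/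
def Ptab (w : List ℕ) : List (List ℕ) := w.foldl (fun t x => insTab x t) []

/-- Add the label `k` to the recording tableau `q` at the unique new cell of shape `p`. -/
def recordCell (k : ℕ) : List (List ℕ) → List (List ℕ) → List (List ℕ)
  | _, [] => []
  | [], _ :: _ => [[k]]
  | q :: qs, p :: ps =>
    if q.length < p.length then (q ++ [k]) :: qs else q :: recordCell k qs ps

/-- The Edelman–Greene recording tableau `Q(w) = EG(w)`. -/
def Qtab (w : List ℕ) : List (List ℕ) :=
  (w.foldl (fun pq x =>
      let P' := insTab x pq.1
      (P', recordCell (pq.2.flatten.length + 1) pq.2 P'))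
    (([], []) : List (List ℕ) × List (List ℕ))).2

/-- A tableau is frozen if the cell in (0-indexed) row `i`, column `j` contains `i + j + 1`. -/
def Frozen (P : List (List ℕ)) : Prop :=
  ∀ i j, i < P.length → j < (P.getD i []).length → (P.getD i []).getD j 0 = i + j + 1

/-- All rows strictly increasing. -/
def RowStrict (P : List (List ℕ)) : Prop := ∀ r ∈ P, List.Pairwise (· < ·) r

/-- All columns strictly increasing. -/
def ColStrict (P : List (List ℕ)) : Prop :=
  ∀ i j, i + 1 < P.length → j < (P.getD (i + 1) []).length →
    (P.getD i []).getD j 0 < (P.getD (i + 1) []).getD j 0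

/-- Valid Young-diagram shape: nonempty rows of weakly decreasing lengths. -/
def TabShape (P : List (List ℕ)) : Prop :=
  (∀ r ∈ P, r ≠ []) ∧ ∀ i, i + 1 < P.length → (P.getD (i + 1) []).length ≤ (P.getD i []).length

/-- The reading word: rows left to right, from the bottom row up. -/
def readingWord (P : List (List ℕ)) : List ℕ := P.reverse.flatten

/-- A standard Young tableau: valid shape, strictly increasing rows and columns, and the
entries are `1, …, N` each exactly once. -/
def IsStandard (Q : List (List ℕ)) : Prop :=
  TabShape Q ∧ RowStrict Q ∧ ColStrict Q ∧ Q.flatten.Perm (List.range' 1 Q.flatten.length)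

/-- `Q` has the staircase shape `sc_n = (n-1, n-2, …, 1)`. -/
def StaircaseShape (n : ℕ) (Q : List (List ℕ)) : Prop :=
  Q.length = n - 1 ∧ ∀ i, i < n - 1 → (Q.getD i []).length = n - 1 - i

/-- A sorting network: a reduced word of the reverse permutation in `S_n`. -/
def IsSortingNetwork (n : ℕ) (w : List ℕ) : Prop :=
  IsReducedWord n Fin.revPerm w

/-- Every intermediate permutation of the word avoids 132. -/
def Avoiding132 (n : ℕ) (w : List ℕ) : Prop :=
  ∀ k, k ≤ w.length → Avoids132 (permOfWord n (w.take k))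

/-- Every intermediate permutation of the word avoids 312. -/
def Avoiding312 (n : ℕ) (w : List ℕ) : Prop :=
  ∀ k, k ≤ w.length → Avoids312 (permOfWord n (w.take k))

/-- `c` is the column word of `Q`: its `k`-th letter (1-indexed) is the (1-indexed) column
of the entry `k` in `Q`. -/
def IsColumnWord (Q : List (List ℕ)) (c : List ℕ) : Prop :=
  c.length = Q.flatten.length ∧
  ∀ k, k < c.length → ∃ i j, i < Q.length ∧ j < (Q.getD i []).length ∧
    (Q.getD i []).getD j 0 = k + 1 ∧ c.getD k 0 = j + 1

/-- All anti-diagonals of `Q` increase downwards: `Q_{i,j} > Q_{i-1,j+1}` (1-indexed). -/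
def AntiDiagDown (Q : List (List ℕ)) : Prop :=
  ∀ i j, i + 1 < Q.length → j < (Q.getD (i + 1) []).length → j + 1 < (Q.getD i []).length →
    (Q.getD i []).getD (j + 1) 0 < (Q.getD (i + 1) []).getD j 0

/-- `σ` is 132-avoiding iff its Rothe diagram equals its connected component
containing the cell `(1,1)` (0-indexed `(0,0)`). -/
lemma rowClose {n : ℕ} {σ : Equiv.Perm (Fin n)} (h : Avoids132 σ) {r c r' : Fin n}
    (hp : (r, c) ∈ rothe σ) (hr : r' ≤ r) : (r', c) ∈ rothe σ := by
  obtain ⟨h1, h2⟩ := hp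
  have hlt : r' < σ c := lt_of_le_of_lt hr h1
  refine ⟨hlt, ?_⟩
  by_contra hc
  push_neg at hc
  have h3 : σ.symm r' < c := by
    rcases lt_or_eq_of_le hc with h | h
    · exact h
    · exfalso; apply absurd hlt
      have h' : σ.symm r' = c := h
      have : σ c = r' := by rw [← h']; simp
      simp [← this]
  have hne : r' < r := by
    rcases lt_or_eq_of_le hr with h | h
    · exact h
    · exfalso; subst h; exact absurd h2 (not_lt.mpr (le_of_lt h3))
  exact h ⟨σ.symm r', c, σ.symm r, h3, h2, by simpa using hne, by simpa using h1⟩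

lemma colClose {n : ℕ} {σ : Equiv.Perm (Fin n)} (h : Avoids132 σ) {r c c' : Fin n}
    (hp : (r, c) ∈ rothe σ) (hc : c' ≤ c) : (r, c') ∈ rothe σ := by
  obtain ⟨h1, h2⟩ := hp
  have hlt : c' < σ.symm r := lt_of_le_of_lt hc h2
  refine ⟨?_, hlt⟩
  by_contra hcc
  push_neg at hcc
  have h3 : σ c' < r := by
    rcases lt_or_eq_of_le hcc with h | h
    · exact h
    · exfalso; apply absurd hlt
      have h' : σ c' = r := h
      have : σ.symm r = c' := by rw [← h']; simp
      simp [← this]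
  have hne : c' < c := by
    rcases lt_or_eq_of_le hc with h | h
    · exact h
    · exfalso; subst h; exact absurd h1 (not_lt.mpr (le_of_lt h3))
  exact h ⟨c', c, σ.symm r, hne, h2, by simpa using h3, by simpa using h1⟩

lemma pathTo {n : ℕ} {σ : Equiv.Perm (Fin n)} (h : Avoids132 σ) (h0 : 0 < n) :
    ∀ k (p : Fin n × Fin n), (p.1 : ℕ) + (p.2 : ℕ) = k → p ∈ rothe σ →
      Relation.ReflTransGen (fun a b => a ∈ rothe σ ∧ b ∈ rothe σ ∧ adjCell a b)
        (⟨⟨0, h0⟩, ⟨0, h0⟩⟩) p := by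
  intro k
  induction k with
  | zero =>
    intro p hs hp
    have : p = (⟨⟨0, h0⟩, ⟨0, h0⟩⟩ : Fin n × Fin n) := by
      have h1 : (p.1 : ℕ) = 0 := by omega
      have h2 : (p.2 : ℕ) = 0 := by omega
      exact Prod.ext (Fin.ext h1) (Fin.ext h2)
    rw [this]
  | succ k ih =>
    intro p hs hp
    have hp' : (p.1, p.2) ∈ rothe σ := hp
    by_cases hc : (p.2 : ℕ) = 0
    · have hpos : 0 < (p.1 : ℕ) := by omega
      set q : Fin n × Fin n := (⟨(p.1 : ℕ) - 1, by omega⟩, p.2) with hq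
      have hqr : q ∈ rothe σ := rowClose h hp'
        (by rw [Fin.le_def]; show (p.1 : ℕ) - 1 ≤ (p.1 : ℕ); omega)
      have hpath := ih q (by show (p.1 : ℕ) - 1 + (p.2 : ℕ) = k; omega) hqr
      refine hpath.tail ⟨hqr, hp, Or.inr ⟨rfl, Or.inl ?_⟩⟩
      show (p.1 : ℕ) - 1 + 1 = (p.1 : ℕ); omega
    · have hpos : 0 < (p.2 : ℕ) := by omega
      set q : Fin n × Fin n := (p.1, ⟨(p.2 : ℕ) - 1, by omega⟩) with hq
      have hqr : q ∈ rothe σ := colClose h hp'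
        (by rw [Fin.le_def]; show (p.2 : ℕ) - 1 ≤ (p.2 : ℕ); omega)
      have hpath := ih q (by show (p.1 : ℕ) + ((p.2 : ℕ) - 1) = k; omega) hqr
      refine hpath.tail ⟨hqr, hp, Or.inl ⟨rfl, Or.inl ?_⟩⟩
      show (p.2 : ℕ) - 1 + 1 = (p.2 : ℕ); omega

lemma sepInv {n : ℕ} {σ : Equiv.Perm (Fin n)} {i1 : Fin n} {h0 : 0 < n}
    {p : Fin n × Fin n}
    (hpath : Relation.ReflTransGen (fun a b => a ∈ rothe σ ∧ b ∈ rothe σ ∧ adjCell a b)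
      (⟨⟨0, h0⟩, ⟨0, h0⟩⟩) p) : ¬ (σ i1 < p.1 ∧ i1 < p.2) := by
  induction hpath with
  | refl => simp [Fin.lt_def]
  | @tail b c hab hbc ih =>
    rintro ⟨hc1, hc2⟩
    obtain ⟨hbr, hcr, hadj⟩ := hbc
    rcases hadj with ⟨heq, hst⟩ | ⟨heq, hst⟩
    · -- same row, columns differ by one
      have hb1 : σ i1 < b.1 := heq ▸ hc1
      have hb2 : ¬ i1 < b.2 := fun h' => ih ⟨hb1, h'⟩
      rw [Fin.lt_def, not_lt] at hb2
      rcases hst with h' | h'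
      · -- b.2 + 1 = c.2, so b.2 = i1
        have hbi : b.2 = i1 := Fin.ext (by rw [Fin.lt_def] at hc2; omega)
        have hx : b.1 < σ b.2 := hbr.1
        rw [hbi] at hx
        exact absurd hx (not_lt.mpr (le_of_lt hb1))
      · rw [Fin.lt_def] at hc2; omega
    · -- same column, rows differ by one
      have hb2 : i1 < b.2 := heq ▸ hc2
      have hb1 : ¬ σ i1 < b.1 := fun h' => ih ⟨h', hb2⟩
      rw [Fin.lt_def, not_lt] at hb1
      rcases hst with h' | h'
      · have hbe : b.1 = σ i1 := Fin.ext (by rw [Fin.lt_def] at hc1; omega)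
        have h2 := hbr.2  -- b.2 < σ.symm b.1
        rw [hbe] at h2
        simp at h2
        exact absurd hb2 (not_lt.mpr (le_of_lt h2))
      · rw [Fin.lt_def] at hc1; omega

theorem avoids132_iff_rothe_eq_comp11 (n : ℕ) (σ : Equiv.Perm (Fin n)) :
    Avoids132 σ ↔ rothe σ = comp11 σ := by
  constructor
  · intro h
    ext p
    constructor
    · intro hp
      have h0 : 0 < n := lt_of_le_of_lt (Nat.zero_le _) p.1.isLt
      have hp' : (p.1, p.2) ∈ rothe σ := hp
      have hcol : (p.1, (⟨0, h0⟩ : Fin n)) ∈ rothe σ := colClose h hp'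
        (by rw [Fin.le_def]; exact Nat.zero_le _)
      have h00 : ((⟨⟨0, h0⟩, ⟨0, h0⟩⟩ : Fin n × Fin n)) ∈ rothe σ := rowClose h hcol
        (by rw [Fin.le_def]; exact Nat.zero_le _)
      exact ⟨h0, pathTo h h0 _ p rfl hp, hp, h00⟩
    · rintro ⟨h0, _, hp, _⟩; exact hp
  · rintro heq ⟨i1, i2, i3, h12, h23, hv1, hv2⟩
    have hq : ((σ i3, i2) : Fin n × Fin n) ∈ rothe σ :=
      ⟨hv2, by simpa using h23⟩
    rw [heq] at hq
    obtain ⟨h0', hpath, _, _⟩ := hq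
    exact sepInv hpath ⟨hv1, h12⟩
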